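/- Fix 1 ≤ p < ∞. Let u : Θ → ℝ be bounded and upper semicontinuous with respect to ←d_p, and suppose there is a constant C_0 ≥ 0 such that lim_{δ→0} sup{ |u(θ') − u(T,ω)| / ←d_p(θ',(T,ω)) : θ' ∈ Θ, ω ∈ Ω, ←d_p(θ',(T,ω)) ≤ δ } ≤ C_0 (with the convention 0/0 = 0). For n > 0 define u^n(θ) := sup_{θ'∈Θ} ( u(θ') − n·←d_p(θ,θ') ). Then there exists N > 0 such that for all n ≥ N and all ω ∈ Ω, u^n(T,ω) = u(T,ω); in fact this holds whenever n ≥ max(C_0+1, 2·sup|u|/δ) for any δ > 0 for which the supremum above (over ←d_p(θ',(T,ω)) ≤ δ) is at most C_0+1. -/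

import Mathlib

noncomputable section

open MeasureTheory Filter

/-- `ℝ^m` with the Euclidean norm. -/
abbrev Em (m : ℕ) : Type := EuclideanSpace ℝ (Fin m)

/-- The path space `Ω`. -/
abbrev PathSp (m : ℕ) (T : ℝ) : Type :=
  {ω : C(Set.Icc (0:ℝ) T, Em m) // ∀ s : Set.Icc (0:ℝ) T, (s : ℝ) = 0 → ω s = 0}

/-- `Θ = [0,T] × Ω`. -/
abbrev ThetaSp (m : ℕ) (T : ℝ) : Type := Set.Icc (0:ℝ) T × PathSp m T

/-- Evaluation of a path at an arbitrary real time, extended by `0` outside `[0,T]`. -/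
def ev {m : ℕ} {T : ℝ} (ω : PathSp m T) (r : ℝ) : Em m :=
  if h : r ∈ Set.Icc (0:ℝ) T then ω.val ⟨r, h⟩ else 0

/-- The backward pseudometric `←d_p` on `Θ`. -/
def dLp {m : ℕ} {T : ℝ} (p : ℝ) (θ θ' : ThetaSp m T) : ℝ :=
  |(θ.1 : ℝ) - (θ'.1 : ℝ)| + ‖ev θ.2 (θ.1 : ℝ) - ev θ'.2 (θ'.1 : ℝ)‖ +
    (∫ s in (0:ℝ)..T, ‖ev θ.2 ((θ.1 : ℝ) - s) - ev θ'.2 ((θ'.1 : ℝ) - s)‖ ^ p) ^ (1 / p)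

/-- The sup-convolution `u^n(θ) = sup_{θ'} ( u(θ') − n ←d_p(θ,θ') )`. -/
def supConv {m : ℕ} {T : ℝ} (p : ℝ) (u : ThetaSp m T → ℝ) (n : ℝ) (θ : ThetaSp m T) : ℝ :=
  ⨆ θ' : ThetaSp m T, (u θ' - n * dLp p θ θ')

/-- The terminal time `T` as an element of `[0,T]`. -/
def endPt (T : ℝ) (hT : 0 < T) : Set.Icc (0:ℝ) T := ⟨T, le_of_lt hT, le_refl T⟩

/-- if `u` is bounded, `←d_p`-upper semicontinuous and satisfies the terminal
Lipschitz-type condition with constant `C_0`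
(`lim_{δ→0} sup { |u(θ') − u(T,ω)| / ←d_p(θ',(T,ω)) : ←d_p(θ',(T,ω)) ≤ δ } ≤ C_0`,
encoded below through the equivalent multiplicative bounds), then the sup-convolutions
`u^n` agree with `u` at terminal time for all large `n`; in fact for all
`n ≥ max (C_0 + 1) (2 sup|u| / δ)` whenever `δ > 0` is such that the sup over distances
`≤ δ` is at most `C_0 + 1`. -/

lemma dLp_nonneg {m : ℕ} {T : ℝ} (hT : 0 ≤ T) {p : ℝ} (hp : 1 ≤ p) (θ θ' : ThetaSp m T) :
    0 ≤ dLp p θ θ' := by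
  unfold dLp
  have h1 : 0 ≤ ∫ s in (0:ℝ)..T, ‖ev θ.2 ((θ.1:ℝ) - s) - ev θ'.2 ((θ'.1:ℝ) - s)‖ ^ p :=
    intervalIntegral.integral_nonneg hT (fun s _ => Real.rpow_nonneg (norm_nonneg _) p)
  have h2 : 0 ≤ (∫ s in (0:ℝ)..T, ‖ev θ.2 ((θ.1:ℝ) - s) - ev θ'.2 ((θ'.1:ℝ) - s)‖ ^ p) ^ (1/p) :=
    Real.rpow_nonneg h1 _
  positivity

lemma dLp_self {m : ℕ} {T : ℝ} {p : ℝ} (hp : 1 ≤ p) (θ : ThetaSp m T) :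
    dLp p θ θ = 0 := by
  have hp0 : p ≠ 0 := by linarith
  have hp1 : (1:ℝ)/p ≠ 0 := by positivity
  unfold dLp
  simp [sub_self, Real.zero_rpow hp0, Real.zero_rpow hp1, Real.zero_rpow (inv_ne_zero hp0)]

lemma dLp_symm {m : ℕ} {T : ℝ} (p : ℝ) (θ θ' : ThetaSp m T) :
    dLp p θ θ' = dLp p θ' θ := by
  unfold dLp
  congr 1
  · rw [abs_sub_comm, norm_sub_rev]
  · congr 1
    exact intervalIntegral.integral_congr fun s _ => by rw [norm_sub_rev]

lemma key_lemma (m : ℕ) (T : ℝ) (hT : 0 < T) (p : ℝ) (hp : 1 ≤ p)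
    (u : ThetaSp m T → ℝ)
    (hbd : BddAbove (Set.range fun θ => |u θ|))
    (C0 : ℝ) (hC0 : 0 ≤ C0) (δ : ℝ) (hδ : 0 < δ)
    (hlip : ∀ (θ' : ThetaSp m T) (ω : PathSp m T),
        dLp p θ' (endPt T hT, ω) ≤ δ →
        |u θ' - u (endPt T hT, ω)| ≤ (C0 + 1) * dLp p θ' (endPt T hT, ω))
    (n : ℝ) (hn : max (C0 + 1) (2 * (⨆ θ : ThetaSp m T, |u θ|) / δ) ≤ n)
    (ω : PathSp m T) : supConv p u n (endPt T hT, ω) = u (endPt T hT, ω) := by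
  have hne : Nonempty (ThetaSp m T) :=
    ⟨(endPt T hT, ⟨ContinuousMap.const _ 0, fun s _ => rfl⟩)⟩
  set M : ℝ := ⨆ θ : ThetaSp m T, |u θ| with hM
  have hMle : ∀ θ : ThetaSp m T, |u θ| ≤ M := fun θ => le_ciSup hbd θ
  set θ₀ : ThetaSp m T := (endPt T hT, ω) with hθ₀
  have hn1 : C0 + 1 ≤ n := le_trans (le_max_left _ _) hn
  have hn0 : 0 ≤ n := by linarith
  have hn2 : 2 * M ≤ n * δ := by
    have h := le_trans (le_max_right (C0 + 1) _) hn
    calc 2 * M = 2 * M / δ * δ := by field_simp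
    _ ≤ n * δ := mul_le_mul_of_nonneg_right h (le_of_lt hδ)
  have hBdd : BddAbove (Set.range fun θ' : ThetaSp m T => u θ' - n * dLp p θ₀ θ') := by
    refine ⟨M, fun x hx => ?_⟩
    obtain ⟨θ', rfl⟩ := hx
    have h1 : 0 ≤ n * dLp p θ₀ θ' :=
      mul_nonneg hn0 (dLp_nonneg (le_of_lt hT) hp _ _)
    have h2 := hMle θ'
    have := abs_le.mp (le_refl |u θ'|)
    have h3 : u θ' ≤ |u θ'| := le_abs_self _
    dsimp only
    linarith
  refine le_antisymm (ciSup_le fun θ' => ?_) ?_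
  · have hd0 : 0 ≤ dLp p θ₀ θ' := dLp_nonneg (le_of_lt hT) hp _ _
    have hsy : dLp p θ₀ θ' = dLp p θ' θ₀ := dLp_symm p _ _
    by_cases hcase : dLp p θ' θ₀ ≤ δ
    · have h := hlip θ' ω hcase
      have h1 : u θ' - u θ₀ ≤ (C0 + 1) * dLp p θ' θ₀ := le_trans (le_abs_self _) h
      have h2 : (C0 + 1) * dLp p θ' θ₀ ≤ n * dLp p θ' θ₀ :=
        mul_le_mul_of_nonneg_right hn1 (by rw [← hsy]; exact hd0)
      rw [hsy]; linarith
    · push_neg at hcase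
      have h1 : u θ' - u θ₀ ≤ 2 * M := by
        have a := hMle θ'; have b := hMle θ₀
        have a' : u θ' ≤ |u θ'| := le_abs_self _
        have b' : -u θ₀ ≤ |u θ₀| := neg_le_abs _
        linarith
      have h2 : n * δ ≤ n * dLp p θ' θ₀ :=
        mul_le_mul_of_nonneg_left (le_of_lt hcase) hn0
      rw [hsy]; linarith
  · have h := le_ciSup hBdd θ₀
    simpa [supConv, dLp_self hp θ₀] using h

theorem stmt6 (m : ℕ) (hm : 1 ≤ m) (T : ℝ) (hT : 0 < T) (p : ℝ) (hp : 1 ≤ p)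
    (u : ThetaSp m T → ℝ)
    (hbd : BddAbove (Set.range fun θ => |u θ|))
    (husc : ∀ (θn : ℕ → ThetaSp m T) (θ : ThetaSp m T),
      Tendsto (fun n => dLp p (θn n) θ) atTop (nhds 0) →
      limsup (fun n => u (θn n)) atTop ≤ u θ)
    (C0 : ℝ) (hC0 : 0 ≤ C0)
    (hterm : ∀ ε > (0:ℝ), ∃ δ > (0:ℝ), ∀ (θ' : ThetaSp m T) (ω : PathSp m T),
      dLp p θ' (endPt T hT, ω) ≤ δ →
      |u θ' - u (endPt T hT, ω)| ≤ (C0 + ε) * dLp p θ' (endPt T hT, ω)) :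
    (∃ N : ℝ, 0 < N ∧ ∀ n : ℝ, N ≤ n → ∀ ω : PathSp m T,
      supConv p u n (endPt T hT, ω) = u (endPt T hT, ω)) ∧
    (∀ δ > (0:ℝ),
      (∀ (θ' : ThetaSp m T) (ω : PathSp m T),
        dLp p θ' (endPt T hT, ω) ≤ δ →
        |u θ' - u (endPt T hT, ω)| ≤ (C0 + 1) * dLp p θ' (endPt T hT, ω)) →
      ∀ n : ℝ, max (C0 + 1) (2 * (⨆ θ : ThetaSp m T, |u θ|) / δ) ≤ n →
        ∀ ω : PathSp m T, supConv p u n (endPt T hT, ω) = u (endPt T hT, ω)) := by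
  have main : ∀ δ > (0:ℝ),
      (∀ (θ' : ThetaSp m T) (ω : PathSp m T),
        dLp p θ' (endPt T hT, ω) ≤ δ →
        |u θ' - u (endPt T hT, ω)| ≤ (C0 + 1) * dLp p θ' (endPt T hT, ω)) →
      ∀ n : ℝ, max (C0 + 1) (2 * (⨆ θ : ThetaSp m T, |u θ|) / δ) ≤ n →
        ∀ ω : PathSp m T, supConv p u n (endPt T hT, ω) = u (endPt T hT, ω) :=
    fun δ hδ hlip n hn ω => key_lemma m T hT p hp u hbd C0 hC0 δ hδ hlip n hn ω
  refine ⟨?_, main⟩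
  obtain ⟨δ, hδ, hlip⟩ := hterm 1 one_pos
  refine ⟨max (C0 + 1) (2 * (⨆ θ : ThetaSp m T, |u θ|) / δ), ?_, fun n hn ω => ?_⟩
  · exact lt_of_lt_of_le (by linarith) (le_max_left _ _)
  · exact main δ hδ hlip n hn ω
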